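/- In the generalized quaternion algebra H(β₁,β₂), for generalized Fibonacci quaternions H_m^{p,q}: ∑_{m=1}^{n} (-1)^{m+1} H_m^{p,q} = (-1)^{n+1} H_{n-1}^{p,q} − p + q + p·e₂ + q·e₃ + (p+q)·e₄, for all n ≥ 1. -/

import Mathlib

open scoped Quaternion

/-- The generalized Fibonacci sequence with `h 0 = p`, `h 1 = q`. -/
def gfib (p q : ℤ) : ℕ → ℤ
  | 0 => p
  | 1 => q
  | n + 2 => gfib p q (n + 1) + gfib p q n

/-- The `n`th generalized Fibonacci quaternion in `H(β₁, β₂) = ℍ[ℝ, -β₁, -β₂]`. -/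
def gfibQuat (β₁ β₂ : ℝ) (p q : ℤ) (n : ℕ) : ℍ[ℝ, -β₁, -β₂] :=
  ⟨(gfib p q n : ℝ), (gfib p q (n + 1) : ℝ), (gfib p q (n + 2) : ℝ),
    (gfib p q (n + 3) : ℝ)⟩

lemma gfibQuat_add (β₁ β₂ : ℝ) (p q : ℤ) (n : ℕ) :
    gfibQuat β₁ β₂ p q (n + 2) = gfibQuat β₁ β₂ p q (n + 1) + gfibQuat β₁ β₂ p q n := by
  ext <;> simp [gfibQuat, gfib, show n+2+1 = n+1+2 by ring,
    show n+2+3 = n+3+2 by ring] <;> push_cast <;> ring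

theorem gfibQuat_alternating_sum (β₁ β₂ : ℝ) (p q : ℤ) (n : ℕ) (hn : 1 ≤ n) :
    ∑ m ∈ Finset.Icc 1 n, (-1 : ℍ[ℝ, -β₁, -β₂]) ^ (m + 1) * gfibQuat β₁ β₂ p q m =
      (-1 : ℍ[ℝ, -β₁, -β₂]) ^ (n + 1) * gfibQuat β₁ β₂ p q (n - 1)
        - (p : ℝ) • (1 : ℍ[ℝ, -β₁, -β₂]) + (q : ℝ) • (1 : ℍ[ℝ, -β₁, -β₂])
        + (p : ℝ) • (⟨0, 1, 0, 0⟩ : ℍ[ℝ, -β₁, -β₂])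
        + (q : ℝ) • (⟨0, 0, 1, 0⟩ : ℍ[ℝ, -β₁, -β₂])
        + ((p : ℝ) + (q : ℝ)) • (⟨0, 0, 0, 1⟩ : ℍ[ℝ, -β₁, -β₂]) := by
  induction n with
  | zero => omega
  | succ k ih =>
    rcases Nat.lt_or_ge k 1 with h | h
    · have hk : k = 0 := by omega
      subst hk
      rw [show Finset.Icc 1 1 = {1} from rfl, Finset.sum_singleton]
      ext <;> simp [gfibQuat, gfib] <;> push_cast <;> ring
    · obtain ⟨j, rfl⟩ : ∃ j, k = j + 1 := ⟨k - 1, by omega⟩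
      rw [Finset.sum_Icc_succ_top (by omega), ih (by omega)]
      simp only [Nat.add_sub_cancel]
      rw [gfibQuat_add]
      have h2 : ((-1 : ℍ[ℝ, -β₁, -β₂]) ^ (j + 1 + 1 + 1)) = (-1) ^ (j + 1) := by
        rw [pow_succ, pow_succ, mul_neg_one, mul_neg_one, neg_neg]
      have h1 : ((-1 : ℍ[ℝ, -β₁, -β₂]) ^ (j + 1 + 1)) = -(-1) ^ (j + 1) := by
        rw [pow_succ, mul_neg_one]
      rw [h1, h2, neg_mul, mul_add]
      abel
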